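/- For natural numbers m₁, m₂, m₃ and k ∈ {3,4,6}, the triple sum H_k(m₁,m₂,m₃) = Σ_{p₁=m₂+m₃}^{m₁+m₂+m₃} Σ_{p₂=m₃}^{m₂+m₃} C_k(p₁,p₂) depends only on m₁ mod k and m₂ mod k (and not on m₃). -/
import Mathlib

open Finset

noncomputable def fsum (z : ℂ) (d : ℕ) : ℂ :=
  ∑ j ∈ range (d + 1), z ^ (2 * (j : ℤ) - (d : ℤ))

noncomputable def Gsum (z : ℂ) (m₁ m₂ : ℕ) : ℂ :=
  ∑ a ∈ range (m₁ + 1), ∑ b ∈ range (m₂ + 1), fsum z (a + b)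

lemma sum_Icc_eq_sum_range' (f : ℕ → ℂ) (a b : ℕ) :
    ∑ i ∈ Finset.Icc a b, f i = ∑ j ∈ range (b + 1 - a), f (a + j) := by
  rw [← Finset.Ico_add_one_right_eq_Icc, Finset.sum_Ico_eq_sum_range]

section
variable {z : ℂ} {k : ℕ} (hz0 : z ≠ 0) (hzk : z ^ k = 1) (hz1 : z ≠ 1) (hz2 : z ^ 2 ≠ 1)

include hz0 in
lemma zpow_helper (c : ℤ) (i : ℕ) : z ^ (c + 2 * (i : ℤ)) = z ^ c * (z ^ 2) ^ i := by
  rw [zpow_add₀ hz0, show 2 * (i : ℤ) = ((2 * i : ℕ) : ℤ) by push_cast; ring,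
    zpow_natCast, pow_mul]

include hz0 hzk hz2 in
lemma fsum_period (d : ℕ) : fsum z (d + k) = fsum z d := by
  have hzk' : z ^ (k : ℤ) = 1 := by rw [zpow_natCast]; exact hzk
  unfold fsum
  have h1 : ∀ j : ℕ, z ^ (2 * (j : ℤ) - ((d + k : ℕ) : ℤ)) = z ^ (2 * (j : ℤ) - (d : ℤ)) := by
    intro j
    push_cast
    rw [show 2 * (j : ℤ) - ((d : ℤ) + k) = (2 * (j : ℤ) - d) + (-k) by ring,
      zpow_add₀ hz0, zpow_neg, hzk', inv_one, mul_one]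
  simp only [h1]
  rw [show d + k + 1 = (d + 1) + k by omega, Finset.sum_range_add]
  have h2 : ∑ i ∈ range k, z ^ (2 * ((d + 1 + i : ℕ) : ℤ) - (d : ℤ)) = 0 := by
    have h3 : ∀ i ∈ range k, z ^ (2 * ((d + 1 + i : ℕ) : ℤ) - (d : ℤ))
        = z ^ ((d : ℤ) + 2) * (z ^ 2) ^ i := by
      intro i _
      rw [← zpow_helper hz0]
      congr 1
      push_cast
      ring
    rw [Finset.sum_congr rfl h3, ← Finset.mul_sum, geom_sum_eq hz2,
      ← pow_mul, mul_comm 2 k, pow_mul, hzk, one_pow, sub_self, zero_div, mul_zero]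
  rw [h2, add_zero]

include hz0 hz2 in
lemma fsum_closed (d : ℕ) : fsum z d = (z ^ d * z ^ 2 - (z⁻¹) ^ d) / (z ^ 2 - 1) := by
  unfold fsum
  have e1 : ∀ j ∈ range (d + 1), z ^ (2 * (j : ℤ) - (d : ℤ))
      = z ^ (-(d : ℤ)) * (z ^ 2) ^ j := by
    intro j _
    rw [← zpow_helper hz0]
    congr 1
    ring
  rw [Finset.sum_congr rfl e1, ← Finset.mul_sum, geom_sum_eq hz2, mul_div_assoc']
  congr 1
  rw [mul_sub, mul_one]
  congr 1
  · rw [← zpow_helper hz0, show -(d : ℤ) + 2 * ((d : ℕ) + 1 : ℕ) = ((d + 2 : ℕ) : ℤ) by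
      push_cast; ring, zpow_natCast, pow_add]
  · rw [zpow_neg, zpow_natCast, inv_pow]

include hz0 hzk hz1 hz2 in
lemma fsum_full : ∑ d ∈ range k, fsum z d = 0 := by
  simp only [fsum_closed hz0 hz2]
  rw [← Finset.sum_div, Finset.sum_sub_distrib, ← Finset.sum_mul,
    geom_sum_eq hz1, hzk, sub_self, zero_div, zero_mul]
  have hzinv1 : z⁻¹ ≠ 1 := by
    intro h
    apply hz1
    rw [← inv_inv z, h, inv_one]
  rw [geom_sum_eq hzinv1, inv_pow, hzk, inv_one, sub_self, zero_div, sub_self, zero_div]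

include hz0 hzk hz1 hz2 in
lemma fsum_window (n : ℕ) : ∑ j ∈ range k, fsum z (n + j) = 0 := by
  induction n with
  | zero => simpa using fsum_full hz0 hzk hz1 hz2
  | succ n ih =>
    have key : ∑ j ∈ range (k + 1), fsum z (n + j)
        = ∑ j ∈ range k, fsum z (n + j) + fsum z (n + k) := Finset.sum_range_succ _ _
    have key2 : ∑ j ∈ range (k + 1), fsum z (n + j)
        = ∑ j ∈ range k, fsum z (n + (j + 1)) + fsum z (n + 0) := Finset.sum_range_succ' _ _
    have hper : fsum z (n + k) = fsum z n := fsum_period hz0 hzk hz2 n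
    have h4 : ∑ j ∈ range k, fsum z (n + (j + 1)) = ∑ j ∈ range k, fsum z (n + j) := by
      have h5 := key.symm.trans key2
      rw [hper] at h5
      simpa using h5.symm
    calc ∑ j ∈ range k, fsum z (n + 1 + j)
        = ∑ j ∈ range k, fsum z (n + (j + 1)) := by
          apply Finset.sum_congr rfl; intro j _; congr 1; omega
      _ = ∑ j ∈ range k, fsum z (n + j) := h4
      _ = 0 := ih

include hz0 hzk hz1 hz2 in
lemma Gsum_step_left (m₁ m₂ : ℕ) : Gsum z (m₁ + k) m₂ = Gsum z m₁ m₂ := by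
  unfold Gsum
  rw [show m₁ + k + 1 = (m₁ + 1) + k by omega, Finset.sum_range_add]
  have h6 : ∑ i ∈ range k, ∑ b ∈ range (m₂ + 1), fsum z ((m₁ + 1 + i) + b) = 0 := by
    rw [Finset.sum_comm]
    apply Finset.sum_eq_zero
    intro b _
    rw [← fsum_window hz0 hzk hz1 hz2 (m₁ + 1 + b)]
    apply Finset.sum_congr rfl; intro j _; congr 1; omega
  rw [h6, add_zero]

lemma Gsum_comm (m₁ m₂ : ℕ) : Gsum z m₁ m₂ = Gsum z m₂ m₁ := by
  unfold Gsum
  rw [Finset.sum_comm]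
  exact Finset.sum_congr rfl fun b _ => Finset.sum_congr rfl fun a _ => by rw [add_comm]

include hz0 hzk hz1 hz2 in
lemma Gsum_mod (m₁ m₂ q : ℕ) : Gsum z (m₁ + k * q) m₂ = Gsum z m₁ m₂ := by
  induction q with
  | zero => simp
  | succ q ih =>
    rw [show m₁ + k * (q + 1) = (m₁ + k * q) + k by ring,
      Gsum_step_left hz0 hzk hz1 hz2, ih]

end

/-- `C_k(p₁,p₂) = Σ_{q=p₂}^{p₁} ξ_k^{2q-(p₁+p₂)}` with `ξ_k = e^{2πi/k}`. -/
noncomputable def Csum (k p₁ p₂ : ℕ) : ℂ :=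
  ∑ q ∈ Finset.Icc p₂ p₁,
    Complex.exp (2 * Real.pi * Complex.I / k) ^ (2 * (q : ℤ) - ((p₁ : ℤ) + (p₂ : ℤ)))

/-- `H_k(m₁,m₂,m₃) = Σ_{p₁=m₂+m₃}^{m₁+m₂+m₃} Σ_{p₂=m₃}^{m₂+m₃} C_k(p₁,p₂)`. -/
noncomputable def Hsum (k m₁ m₂ m₃ : ℕ) : ℂ :=
  ∑ p₁ ∈ Finset.Icc (m₂ + m₃) (m₁ + m₂ + m₃), ∑ p₂ ∈ Finset.Icc m₃ (m₂ + m₃),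
    Csum k p₁ p₂

lemma Csum_eq_fsum (k p₁ p₂ : ℕ) (h : p₂ ≤ p₁) :
    Csum k p₁ p₂ = fsum (Complex.exp (2 * Real.pi * Complex.I / k)) (p₁ - p₂) := by
  unfold Csum fsum
  rw [sum_Icc_eq_sum_range', show p₁ + 1 - p₂ = (p₁ - p₂) + 1 by omega]
  apply Finset.sum_congr rfl
  intro j _
  congr 1
  have h7 : ((p₁ - p₂ : ℕ) : ℤ) = (p₁ : ℤ) - p₂ := by omega
  push_cast [h7]
  ring

lemma Hsum_eq_Gsum (k m₁ m₂ m₃ : ℕ) :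
    Hsum k m₁ m₂ m₃ = Gsum (Complex.exp (2 * Real.pi * Complex.I / k)) m₁ m₂ := by
  unfold Hsum Gsum
  rw [sum_Icc_eq_sum_range' _ (m₂ + m₃),
    show m₁ + m₂ + m₃ + 1 - (m₂ + m₃) = m₁ + 1 by omega]
  apply Finset.sum_congr rfl
  intro a _
  rw [sum_Icc_eq_sum_range' _ m₃, show m₂ + m₃ + 1 - m₃ = m₂ + 1 by omega,
    ← Finset.sum_range_reflect]
  apply Finset.sum_congr rfl
  intro c hc
  simp only [Finset.mem_range] at hc
  rw [Csum_eq_fsum _ _ _ (by omega)]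
  congr 1
  omega

/-- for `k ∈ {3,4,6}`, the triple sum `H_k(m₁,m₂,m₃)` depends only
on `m₁ mod k` and `m₂ mod k` (and not on `m₃`). -/
theorem stmt11 :
    ∀ k ∈ ({3, 4, 6} : Set ℕ), ∀ m₁ m₂ m₃ n₁ n₂ n₃ : ℕ,
      m₁ % k = n₁ % k → m₂ % k = n₂ % k → Hsum k m₁ m₂ m₃ = Hsum k n₁ n₂ n₃ := by
  intro k hk m₁ m₂ m₃ n₁ n₂ n₃ h1 h2
  have hk2 : 2 < k := by
    simp only [Set.mem_insert_iff, Set.mem_singleton_iff] at hk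
    rcases hk with rfl | rfl | rfl <;> norm_num
  set z := Complex.exp (2 * Real.pi * Complex.I / k) with hz
  have hprim : IsPrimitiveRoot z k := Complex.isPrimitiveRoot_exp k (by omega)
  have hz0 : z ≠ 0 := hprim.ne_zero (by omega)
  have hzk : z ^ k = 1 := hprim.pow_eq_one
  have hz1 : z ≠ 1 := hprim.ne_one (by omega)
  have hz2 : z ^ 2 ≠ 1 := hprim.pow_ne_one_of_pos_of_lt (by omega) hk2
  rw [Hsum_eq_Gsum, Hsum_eq_Gsum]
  have key : ∀ a b : ℕ, a % k = b % k → ∀ c, Gsum z a c = Gsum z b c := by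
    intro a b hab c
    rw [← Nat.mod_add_div a k, ← Nat.mod_add_div b k,
      Gsum_mod hz0 hzk hz1 hz2, Gsum_mod hz0 hzk hz1 hz2, hab]
  rw [key m₁ n₁ h1 m₂, Gsum_comm, key m₂ n₂ h2 n₁, Gsum_comm]
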